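/- Let p > 1, h ≥ 0, and t₁ < t₂. Suppose Z : [t₁,t₂] × [0,1] → ℝ is twice continuously differentiable, satisfies Z(t,0) = Z(t,1) = 0 for all t ∈ [t₁,t₂], and solves ∂_t Z = ∂²_{xx} Z + Z|Z|^{p-1} − h|Z|^{p-1} − h on [t₁,t₂] × [0,1]. Define φ(t) = ∫₀¹ Z(t,x)² dx. Then for every t₀ ∈ (t₁,t₂): φ'(t₀) ≥ −4 S^{(h)}(Z(t₀,·)) + 2 ∫₀¹ ( ((p-1)/(p+1)) |Z(t₀,x)|^{p+1} − h ((p+2)/p) |Z(t₀,x)|^{p} − h |Z(t₀,x)| ) dx. -/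

import Mathlib

open Set MeasureTheory

/-- The modified potential
`S⁽ʰ⁾(v) = ∫₀¹ ((1/2) v'² − |v|^{p+1}/(p+1) + h v|v|^{p-1} + h v)`. -/
noncomputable def potSh (p h : ℝ) (v : ℝ → ℝ) : ℝ :=
  ∫ x in (0:ℝ)..1, ((1/2) * (deriv v x) ^ 2 - |v x| ^ (p + 1) / (p + 1)
    + h * (v x * |v x| ^ (p - 1)) + h * v x)

/-- Energy estimate for the comparison equation
`∂ₜZ = ∂ₓₓZ + Z|Z|^{p-1} − h|Z|^{p-1} − h`:  with `φ(t) = ∫₀¹ Z(t,x)² dx`, one has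
`φ'(t₀) ≥ −4 S⁽ʰ⁾(Z(t₀,·)) + 2∫₀¹ ( ((p-1)/(p+1))|Z|^{p+1} − h((p+2)/p)|Z|^p − h|Z| )`. -/
theorem stmt6 (p h t₁ t₂ : ℝ) (hp : 1 < p) (hh : 0 ≤ h) (ht : t₁ < t₂)
    (Z : ℝ → ℝ → ℝ)
    (hZ : ContDiff ℝ 2 (fun q : ℝ × ℝ => Z q.1 q.2))
    (hbc : ∀ t ∈ Icc t₁ t₂, Z t 0 = 0 ∧ Z t 1 = 0)
    (hpde : ∀ t ∈ Icc t₁ t₂, ∀ x ∈ Icc (0:ℝ) 1,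
      deriv (fun s => Z s x) t =
        deriv (deriv (Z t)) x + Z t x * |Z t x| ^ (p - 1)
          - h * |Z t x| ^ (p - 1) - h) :
    ∀ t₀ ∈ Ioo t₁ t₂,
      DifferentiableAt ℝ (fun t => ∫ x in (0:ℝ)..1, (Z t x) ^ 2) t₀ ∧
      -4 * potSh p h (Z t₀) +
          2 * ∫ x in (0:ℝ)..1,
            (((p - 1) / (p + 1)) * |Z t₀ x| ^ (p + 1)
              - h * ((p + 2) / p) * |Z t₀ x| ^ p - h * |Z t₀ x|)
        ≤ deriv (fun t => ∫ x in (0:ℝ)..1, (Z t x) ^ 2) t₀ := by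
  intro t₀ ht₀
  have ht₀' : t₀ ∈ Icc t₁ t₂ := ⟨ht₀.1.le, ht₀.2.le⟩
  have hp0 : (0:ℝ) < p := by linarith
  have hp1 : (0:ℝ) < p + 1 := by linarith
  set G : ℝ × ℝ → ℝ := fun q => Z q.1 q.2 with hGdef
  have hGd : Differentiable ℝ G := hZ.differentiable (by norm_num)
  -- partial derivative in t
  have hDt : ∀ t x, HasDerivAt (fun s => Z s x) (fderiv ℝ G (t, x) (1, 0)) t := by
    intro t x
    exact (hGd (t, x)).hasFDerivAt.comp_hasDerivAt t
      ((hasDerivAt_id t).prodMk (hasDerivAt_const t x))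
  have hfd : Continuous (fun q : ℝ × ℝ => fderiv ℝ G q (1, 0)) :=
    (hZ.continuous_fderiv (by norm_num)).clm_apply continuous_const
  set F' : ℝ → ℝ → ℝ := fun t x => 2 * Z t x * fderiv ℝ G (t, x) (1, 0) with hF'def
  have hDt2 : ∀ t x, HasDerivAt (fun s => Z s x ^ 2) (F' t x) t := by
    intro t x
    have := (hDt t x).fun_pow 2
    simpa [hF'def, mul_comm] using this
  have hF'c : Continuous (fun q : ℝ × ℝ => F' q.1 q.2) :=
    (continuous_const.mul hZ.continuous).mul hfd
  -- bound on a compact neighbourhood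
  obtain ⟨C, hC⟩ := ((isCompact_Icc (a := t₀ - 1) (b := t₀ + 1)).prod
    (isCompact_Icc (a := (0:ℝ)) (b := 1))).exists_bound_of_continuousOn hF'c.continuousOn
  -- differentiation under the integral sign
  have hcontx : ∀ t, Continuous (fun x => Z t x) := fun t =>
    hZ.continuous.comp (Continuous.prodMk_right t)
  have key := intervalIntegral.hasDerivAt_integral_of_dominated_loc_of_deriv_le
    (F := fun t x => Z t x ^ 2) (F' := F') (x₀ := t₀) (a := 0) (b := 1)
    (μ := MeasureTheory.volume) (bound := fun _ => C) (Metric.ball_mem_nhds t₀ one_pos)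
    (Filter.Eventually.of_forall fun t =>
      (((hcontx t).pow 2).aestronglyMeasurable))
    (((hcontx t₀).pow 2).intervalIntegrable 0 1)
    (((continuous_const.mul (hcontx t₀)).mul
      (hfd.comp (Continuous.prodMk_right t₀))).aestronglyMeasurable)
    (Filter.Eventually.of_forall fun x hx t htb => by
      have hx' : x ∈ Icc (0:ℝ) 1 := by
        rw [Set.uIoc_of_le (by norm_num : (0:ℝ) ≤ 1)] at hx
        exact Ioc_subset_Icc_self hx
      have ht' : t ∈ Icc (t₀ - 1) (t₀ + 1) := by
        rw [Real.ball_eq_Ioo] at htb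
        exact Ioo_subset_Icc_self htb
      exact hC (t, x) ⟨ht', hx'⟩)
    (intervalIntegrable_const)
    (Filter.Eventually.of_forall fun x _ t _ => hDt2 t x)
  obtain ⟨-, hder⟩ := key
  refine ⟨hder.differentiableAt, ?_⟩
  rw [hder.deriv]
  -- regularity in x at time t₀
  have hu2 : ContDiff ℝ 2 (Z t₀) := hZ.comp (contDiff_const.prodMk contDiff_id)
  have h21 : ContDiff ℝ (1 + 1 : WithTop ℕ∞) (Z t₀) := by
    rw [show (1 + 1 : WithTop ℕ∞) = 2 by norm_num]; exact hu2
  have hud : ContDiff ℝ 1 (deriv (Z t₀)) := (contDiff_succ_iff_deriv.mp h21).2.2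
  have hu'c : Continuous (deriv (Z t₀)) := hud.continuous
  have hdd : Continuous (deriv (deriv (Z t₀))) := (contDiff_one_iff_deriv.mp hud).2
  have hzc : Continuous (Z t₀) := hu2.continuous
  have habs : Continuous (fun x => |Z t₀ x|) := hzc.abs
  have hrp : ∀ q : ℝ, 0 ≤ q → Continuous (fun x => |Z t₀ x| ^ q) := fun q hq =>
    habs.rpow_const (fun x => Or.inr hq)
  have hrp1 : Continuous (fun x => |Z t₀ x| ^ (p - 1)) := hrp _ (by linarith)
  have hrpp : Continuous (fun x => |Z t₀ x| ^ p) := hrp _ hp0.le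
  have hrpp1 : Continuous (fun x => |Z t₀ x| ^ (p + 1)) := hrp _ (by linarith)
  -- rewrite the derivative integrand using the PDE
  set c₁ : ℝ → ℝ := fun x => Z t₀ x * deriv (deriv (Z t₀)) x with hc₁def
  set c₂ : ℝ → ℝ := fun x =>
    Z t₀ x ^ 2 * |Z t₀ x| ^ (p - 1) - h * (Z t₀ x * |Z t₀ x| ^ (p - 1)) - h * Z t₀ x
    with hc₂def
  have hc₁c : Continuous c₁ := hzc.mul hdd
  have hc₂c : Continuous c₂ :=
    (((hzc.pow 2).mul hrp1).sub (continuous_const.mul (hzc.mul hrp1))).sub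
      (continuous_const.mul hzc)
  have hstep1 : ∫ x in (0:ℝ)..1, F' t₀ x = ∫ x in (0:ℝ)..1, (2 * c₁ x + 2 * c₂ x) := by
    apply intervalIntegral.integral_congr
    intro x hx
    have hx' : x ∈ Icc (0:ℝ) 1 := by
      rwa [Set.uIcc_of_le (by norm_num : (0:ℝ) ≤ 1)] at hx
    have hpd := hpde t₀ ht₀' x hx'
    have hdval : fderiv ℝ G (t₀, x) (1, 0) = deriv (fun s => Z s x) t₀ :=
      ((hDt t₀ x).deriv).symm
    simp only [hF'def, hdval, hpd, hc₁def, hc₂def]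
    ring
  have hstep2 : ∫ x in (0:ℝ)..1, (2 * c₁ x + 2 * c₂ x)
      = 2 * (∫ x in (0:ℝ)..1, c₁ x) + 2 * ∫ x in (0:ℝ)..1, c₂ x := by
    rw [intervalIntegral.integral_add ((continuous_const.fun_mul hc₁c).intervalIntegrable 0 1)
      ((continuous_const.fun_mul hc₂c).intervalIntegrable 0 1),
      intervalIntegral.integral_const_mul, intervalIntegral.integral_const_mul]
  -- integration by parts
  have hibp : ∫ x in (0:ℝ)..1, c₁ x = - ∫ x in (0:ℝ)..1, (deriv (Z t₀) x) ^ 2 := by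
    have := intervalIntegral.integral_mul_deriv_eq_deriv_mul
      (u := Z t₀) (v := deriv (Z t₀)) (u' := deriv (Z t₀)) (v' := deriv (deriv (Z t₀)))
      (a := 0) (b := 1)
      (fun x _ => (hu2.differentiable (by norm_num) x).hasDerivAt)
      (fun x _ => ((contDiff_one_iff_deriv.mp hud).1 x).hasDerivAt)
      (hu'c.intervalIntegrable 0 1) (hdd.intervalIntegrable 0 1)
    rw [hc₁def]
    simp only []
    rw [this, (hbc t₀ ht₀').1, (hbc t₀ ht₀').2]
    have : ∫ x in (0:ℝ)..1, deriv (Z t₀) x * deriv (Z t₀) x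
        = ∫ x in (0:ℝ)..1, (deriv (Z t₀) x) ^ 2 := by
      apply intervalIntegral.integral_congr; intro x _; simp [sq]
    rw [this]; ring
  rw [hstep1, hstep2, hibp]
  -- expand the potential and combine everything into one integral inequality
  set P : ℝ → ℝ := fun x => (1/2) * (deriv (Z t₀) x) ^ 2 - |Z t₀ x| ^ (p + 1) / (p + 1)
    + h * (Z t₀ x * |Z t₀ x| ^ (p - 1)) + h * Z t₀ x with hPdef
  have hPc : Continuous P := by
    exact (((continuous_const.mul (hu'c.pow 2)).sub (hrpp1.div_const _)).add
      (continuous_const.mul (hzc.mul hrp1))).add (continuous_const.mul hzc)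
  set g : ℝ → ℝ := fun x => ((p - 1) / (p + 1)) * |Z t₀ x| ^ (p + 1)
    - h * ((p + 2) / p) * |Z t₀ x| ^ p - h * |Z t₀ x| with hgdef
  have hgc : Continuous g := ((continuous_const.mul hrpp1).sub
    (continuous_const.mul hrpp)).sub (continuous_const.mul habs)
  have hLHS : -4 * potSh p h (Z t₀) + 2 * (∫ x in (0:ℝ)..1, g x)
      = ∫ x in (0:ℝ)..1, ((-4) * P x + 2 * g x) := by
    rw [intervalIntegral.integral_add ((continuous_const.fun_mul hPc).intervalIntegrable 0 1)
      ((continuous_const.fun_mul hgc).intervalIntegrable 0 1),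
      intervalIntegral.integral_const_mul, intervalIntegral.integral_const_mul]
    rfl
  have hRHS : 2 * (-∫ x in (0:ℝ)..1, (deriv (Z t₀) x) ^ 2) + 2 * ∫ x in (0:ℝ)..1, c₂ x
      = ∫ x in (0:ℝ)..1, ((-2) * (deriv (Z t₀) x) ^ 2 + 2 * c₂ x) := by
    rw [intervalIntegral.integral_add
      ((continuous_const.fun_mul (hu'c.fun_pow 2)).intervalIntegrable 0 1)
      ((continuous_const.fun_mul hc₂c).intervalIntegrable 0 1),
      intervalIntegral.integral_const_mul, intervalIntegral.integral_const_mul]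
    ring
  rw [hLHS, hRHS]
  -- pointwise comparison
  apply intervalIntegral.integral_mono_on (by norm_num)
    (((continuous_const.fun_mul hPc).fun_add (continuous_const.fun_mul hgc)).intervalIntegrable 0 1)
    (((continuous_const.fun_mul (hu'c.fun_pow 2)).fun_add
      (continuous_const.fun_mul hc₂c)).intervalIntegrable 0 1)
  intro x _
  simp only [hPdef, hgdef, hc₂def]
  set z := Z t₀ x with hz
  set w := deriv (Z t₀) x with hw
  have ha : (0:ℝ) ≤ |z| ^ (p - 1) := Real.rpow_nonneg (abs_nonneg z) _
  set a := |z| ^ (p - 1) with hadef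
  have hA : |z| ^ (p + 1) = z ^ 2 * a := by
    rw [hadef, show p + 1 = 2 + (p - 1) by ring,
      Real.rpow_add_of_nonneg (abs_nonneg z) (by norm_num) (by linarith),
      show ((2:ℝ)) = ((2:ℕ):ℝ) by norm_num, Real.rpow_natCast, sq_abs]
  have hB : |z| ^ p = |z| * a := by
    have h2 : |z| ^ ((1:ℝ) + (p - 1)) = |z| ^ (1:ℝ) * |z| ^ (p - 1) :=
      Real.rpow_add_of_nonneg (abs_nonneg z) (by norm_num) (by linarith)
    rw [show (1:ℝ) + (p - 1) = p by ring, Real.rpow_one] at h2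
    rw [hadef, h2]
  rw [hA, hB]
  have hz1 : -|z| ≤ z := neg_abs_le z
  have hk1 : 0 ≤ h * (z + |z|) := mul_nonneg hh (by linarith)
  have hk2 : 0 ≤ h * ((z + |z|) * a) := mul_nonneg hh (mul_nonneg (by linarith) ha)
  have hk3 : 0 ≤ h / p * (|z| * a) :=
    mul_nonneg (div_nonneg hh hp0.le) (mul_nonneg (abs_nonneg z) ha)
  have keyeq : ((-2) * w ^ 2 + 2 * (z ^ 2 * a - h * (z * a) - h * z))
      - ((-4) * ((1/2) * w ^ 2 - z ^ 2 * a / (p + 1) + h * (z * a) + h * z)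
        + 2 * (((p - 1) / (p + 1)) * (z ^ 2 * a) - h * ((p + 2) / p) * (|z| * a) - h * |z|))
      = 2 * (h * ((z + |z|) * a)) + 2 * (h * (z + |z|)) + 4 * (h / p * (|z| * a)) := by
    field_simp
    ring
  linarith [keyeq, hk1, hk2, hk3]
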